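/- Let A be an associative algebra over a field K of characteristic 0 such that x² is central in A for every x in a subspace G of A, and let g₁, …, gₙ ∈ G. Then gᵢ · Sₙ(g₁,…,gₙ) = (−1)^{n−1} · Sₙ(g₁,…,gₙ) · gᵢ for every i = 1,…,n, where Sₙ is the standard polynomial. -/

import Mathlib

/-- The standard polynomial `Sₙ` evaluated at `v₁, …, vₙ`. -/
def stdPoly {A : Type*} [Ring A] (n : ℕ) (v : Fin n → A) : A :=
  ∑ σ : Equiv.Perm (Fin n),
    ((Equiv.Perm.sign σ : ℤ) • (List.ofFn fun i => v (σ i)).prod)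

open Equiv Equiv.Perm Finset

set_option linter.unusedSectionVars false

namespace Stmt11Aux

variable {A : Type*} [Ring A]

/-- The word associated to a permutation. -/
def wrd (n : ℕ) (g : Fin n → A) (σ : Perm (Fin n)) : List A :=
  List.ofFn fun m => g (σ m)

@[simp] lemma length_wrd (n : ℕ) (g : Fin n → A) (σ : Perm (Fin n)) :
    (wrd n g σ).length = n := by simp [wrd]

lemma getElem_wrd (n : ℕ) (g : Fin n → A) (σ : Perm (Fin n)) (m : ℕ) (hm : m < n) :
    (wrd n g σ)[m]'(by simpa using hm) = g (σ ⟨m, hm⟩) := by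
  simp [wrd]

/-- `x` inserted at position `k` of the word, as a product. -/
def MM (n : ℕ) (g : Fin n → A) (x : A) (k : ℕ) : A :=
  ∑ σ : Perm (Fin n), (Perm.sign σ : ℤ) •
    (((wrd n g σ).take k).prod * x * ((wrd n g σ).drop k).prod)

def EE (n : ℕ) (g : Fin n → A) (x : A) (k : Fin n) : A :=
  ∑ σ : Perm (Fin n), (Perm.sign σ : ℤ) •
    ((x * g (σ k) + g (σ k) * x) *
      (((wrd n g σ).take (k : ℕ)).prod * ((wrd n g σ).drop ((k : ℕ) + 1)).prod))

lemma MM_zero (n : ℕ) (g : Fin n → A) (x : A) :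
    MM n g x 0 = x * stdPoly n g := by
  unfold MM stdPoly
  rw [Finset.mul_sum]
  refine Finset.sum_congr rfl fun σ _ => ?_
  rw [mul_smul_comm]
  simp [wrd]

lemma MM_top (n : ℕ) (g : Fin n → A) (x : A) :
    MM n g x n = stdPoly n g * x := by
  unfold MM stdPoly
  rw [Finset.sum_mul]
  refine Finset.sum_congr rfl fun σ _ => ?_
  rw [smul_mul_assoc]
  have h1 : (wrd n g σ).take n = wrd n g σ := by
    apply List.take_of_length_le; simp
  have h2 : (wrd n g σ).drop n = [] := by
    apply List.drop_of_length_le; simp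
  rw [h1, h2]
  simp [wrd]


lemma MM_succ (n : ℕ) (g : Fin n → A) (x : A)
    (hc : ∀ (j : Fin n) (z : A), (x * g j + g j * x) * z = z * (x * g j + g j * x))
    (k : ℕ) (hk : k < n) :
    MM n g x (k + 1) = -MM n g x k + EE n g x ⟨k, hk⟩ := by
  unfold MM EE
  rw [← Finset.sum_neg_distrib, ← Finset.sum_add_distrib]
  refine Finset.sum_congr rfl fun σ _ => ?_
  rw [← smul_neg, ← smul_add]
  congr 1
  have hlen : k < (wrd n g σ).length := by simpa using hk
  have h1 : ((wrd n g σ).take (k + 1)).prod = ((wrd n g σ).take k).prod * g (σ ⟨k, hk⟩) := by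
    rw [List.prod_take_succ _ _ hlen, getElem_wrd]
  have h2 : ((wrd n g σ).drop k).prod = g (σ ⟨k, hk⟩) * ((wrd n g σ).drop (k + 1)).prod := by
    rw [List.drop_eq_getElem_cons hlen, List.prod_cons, getElem_wrd]
  rw [h1, h2]
  set T := ((wrd n g σ).take k).prod
  set D := ((wrd n g σ).drop (k + 1)).prod
  set G := g (σ ⟨k, hk⟩)
  have hc' : (x * G + G * x) * T = T * (x * G + G * x) := hc (σ ⟨k, hk⟩) T
  have hC : (x * G + G * x) * (T * D) = T * ((x * G + G * x) * D) := by
    rw [← mul_assoc, hc', mul_assoc]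
  rw [hC]
  noncomm_ring

lemma EE_succ (n : ℕ) (g : Fin n → A) (x : A) (k : ℕ) (hk : k + 1 < n) :
    EE n g x ⟨k + 1, hk⟩ = -EE n g x ⟨k, Nat.lt_of_succ_lt hk⟩ := by
  unfold EE
  rw [← Finset.sum_neg_distrib]
  have hab : (⟨k, Nat.lt_of_succ_lt hk⟩ : Fin n) ≠ ⟨k + 1, hk⟩ := by
    simp [Fin.ext_iff]
  refine (Fintype.sum_equiv
    (Equiv.mulRight (Equiv.swap (⟨k, Nat.lt_of_succ_lt hk⟩ : Fin n) ⟨k + 1, hk⟩))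
    _ _ fun σ => ?_).symm
  -- goal: -(sign σ • (C(σ k) * (take k * drop (k+1)))) =
  --   sign (σ * swap) • (C(σ' (k+1)) * (take (k+1) * drop (k+2)))
  set a : Fin n := ⟨k, Nat.lt_of_succ_lt hk⟩
  set b : Fin n := ⟨k + 1, hk⟩
  set τ : Perm (Fin n) := σ * Equiv.swap a b with hτ
  have hsign : (Perm.sign τ : ℤ) = -(Perm.sign σ : ℤ) := by
    simp [hτ, Equiv.Perm.sign_swap, hab]
  have hτb : τ b = σ a := by simp [hτ, Equiv.swap_apply_right]
  have hτa : τ a = σ b := by simp [hτ, Equiv.swap_apply_left]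
  have hτm : ∀ (m : ℕ) (hm : m < n), m ≠ k → m ≠ k + 1 →
      τ ⟨m, hm⟩ = σ ⟨m, hm⟩ := by
    intro m hm h1 h2
    have : Equiv.swap a b ⟨m, hm⟩ = ⟨m, hm⟩ :=
      Equiv.swap_apply_of_ne_of_ne (by simp [a, Fin.ext_iff, h1]) (by simp [b, Fin.ext_iff, h2])
    simp [hτ, Equiv.Perm.mul_apply, this]
  have htake : (wrd n g τ).take (k + 1) = (wrd n g σ).take k ++ [g (σ b)] := by
    apply List.ext_getElem
    · simp; omega
    · intro m hm1 hm2
      have hmk : m < k + 1 := by simp at hm1; omega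
      have hmn : m < n := lt_trans hmk hk
      rcases Nat.lt_or_ge m k with h | h
      · rw [List.getElem_take, List.getElem_append_left (by simp; omega),
          List.getElem_take, getElem_wrd _ _ _ _ hmn, getElem_wrd _ _ _ _ hmn, hτm m hmn (by omega) (by omega)]
      · have hmk' : m = k := by omega
        subst hmk'
        rw [List.getElem_take, getElem_wrd _ _ _ _ hmn,
          List.getElem_append_right (by simp)]
        have : (⟨m, hmn⟩ : Fin n) = a := by simp [a]
        rw [this, hτa]
        simp
  have hdrop : (wrd n g τ).drop (k + 2) = (wrd n g σ).drop (k + 2) := by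
    apply List.ext_getElem
    · simp
    · intro m hm1 hm2
      have hmn : k + 2 + m < n := by simp at hm1; omega
      rw [List.getElem_drop, List.getElem_drop, getElem_wrd _ _ _ _ hmn,
        getElem_wrd _ _ _ _ hmn, hτm _ hmn (by omega) (by omega)]
  have hD : ((wrd n g σ).drop (k + 1)).prod =
      g (σ b) * ((wrd n g σ).drop (k + 2)).prod := by
    rw [List.drop_eq_getElem_cons (by simpa using hk), List.prod_cons, getElem_wrd]
  have hmr : (Equiv.mulRight (Equiv.swap a b)) σ = τ := rfl
  rw [hmr]
  have hb1 : ((b : ℕ)) = k + 1 := rfl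
  have ha1 : ((a : ℕ)) = k := rfl
  rw [hb1, ha1, hτb, hsign, htake, hdrop, hD, List.prod_append, List.prod_singleton]
  have key : ∀ P Q : A, P = Q →
      -((Perm.sign σ : ℤ) • P) = (-(Perm.sign σ : ℤ)) • Q := by
    intro P Q h; rw [h, neg_smul]
  apply key
  noncomm_ring


lemma EE_pow (n : ℕ) (g : Fin n → A) (x : A) (hn : 0 < n) :
    ∀ (k : ℕ) (hk : k < n), EE n g x ⟨k, hk⟩ = ((-1 : ℤ) ^ k) • EE n g x ⟨0, hn⟩ := by
  intro k
  induction k with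
  | zero => intro hk; simp
  | succ k ih =>
    intro hk
    rw [EE_succ n g x k hk, ih (Nat.lt_of_succ_lt hk), pow_succ]
    rw [← neg_one_smul ℤ (((-1 : ℤ) ^ k) • EE n g x ⟨0, hn⟩), smul_smul, mul_comm]

lemma MM_closed (n : ℕ) (g : Fin n → A) (x : A) (hn : 0 < n)
    (hc : ∀ (j : Fin n) (z : A), (x * g j + g j * x) * z = z * (x * g j + g j * x)) :
    ∀ (k : ℕ), k ≤ n → MM n g x k =
      ((-1 : ℤ) ^ k) • (MM n g x 0 - (k : ℤ) • EE n g x ⟨0, hn⟩) := by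
  intro k
  induction k with
  | zero => intro _; simp
  | succ k ih =>
    intro hk
    have hk' : k < n := hk
    rw [MM_succ n g x hc k hk', ih (le_of_lt hk'), EE_pow n g x hn k hk']
    set a := MM n g x 0
    set b := EE n g x ⟨0, hn⟩
    rw [pow_succ]
    push_cast
    module


set_option maxHeartbeats 1000000 in
lemma expansion (n : ℕ) (g : Fin n → A) (x : A) :
    ∑ k : Fin (n + 1), ((-1 : ℤ) ^ (k : ℕ)) • MM n g x (k : ℕ)
      = stdPoly (n + 1) (Fin.cons x g) := by
  unfold MM stdPoly
  simp_rw [Finset.smul_sum]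
  rw [← Fintype.sum_prod_type']
  refine Fintype.sum_bijective
    (fun p : Fin (n + 1) × Perm (Fin n) =>
      Equiv.Perm.decomposeFin.symm (0, p.2) * (p.1.cycleRange))
    ?_ _ _ ?_
  · rw [Fintype.bijective_iff_injective_and_card]
    refine ⟨?_, by simp [Fintype.card_perm, Nat.factorial_succ]⟩
    rintro ⟨k, σ⟩ ⟨k', σ'⟩ h
    simp only at h
    have hinv : ∀ (k0 : Fin (n + 1)) (σ0 : Perm (Fin n)),
        (Equiv.Perm.decomposeFin.symm (0, σ0) * k0.cycleRange)⁻¹ 0 = k0 := by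
      intro k0 σ0
      rw [Equiv.Perm.inv_def, Equiv.symm_apply_eq]
      simp only [Equiv.Perm.mul_apply, Fin.cycleRange_self]
      exact (Equiv.Perm.decomposeFin_symm_apply_zero 0 σ0).symm
    have hk : k = k' := by rw [← hinv k σ, ← hinv k' σ', h]
    subst hk
    have hD : Equiv.Perm.decomposeFin.symm (0, σ) =
        Equiv.Perm.decomposeFin.symm (0, σ') := mul_right_cancel h
    have h2 := Equiv.Perm.decomposeFin.symm.injective hD
    simp only [Prod.mk.injEq] at h2
    exact Prod.ext rfl h2.2
  · rintro ⟨k, σ⟩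
    set π : Perm (Fin (n + 1)) :=
      Equiv.Perm.decomposeFin.symm (0, σ) * k.cycleRange with hπ
    have hkn : (k : ℕ) ≤ n := Nat.lt_succ_iff.mp k.isLt
    have hsign : (Perm.sign π : ℤ) = (-1) ^ (k : ℕ) * (Perm.sign σ : ℤ) := by
      rw [hπ, Equiv.Perm.sign_mul, Equiv.Perm.decomposeFin.symm_sign,
        Fin.sign_cycleRange]
      simp [mul_comm]
    have hπ1 : ∀ (m : ℕ) (hm : m < n), m < (k : ℕ) →
        π ⟨m, by omega⟩ = (σ ⟨m, hm⟩).succ := by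
      intro m hm hmk
      have hc1 : k.cycleRange ⟨m, by omega⟩ = (⟨m, hm⟩ : Fin n).succ := by
        have h1 : (⟨m, by omega⟩ : Fin (n + 1)) < k := hmk
        rw [Fin.cycleRange_of_lt h1]
        have hlt : (⟨m, by omega⟩ : Fin (n + 1)) < Fin.last n := by
          rw [Fin.lt_def]; simpa using hm
        rw [Fin.ext_iff, Fin.val_add_one_of_lt hlt]
        simp
      rw [hπ, Equiv.Perm.mul_apply, hc1, Equiv.Perm.decomposeFin_symm_apply_succ,
        Equiv.swap_self]
      simp
    have hπ2 : π ⟨(k : ℕ), by omega⟩ = 0 := by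
      have : (⟨(k : ℕ), by omega⟩ : Fin (n + 1)) = k := rfl
      rw [hπ, Equiv.Perm.mul_apply, this, Fin.cycleRange_self]
      exact Equiv.Perm.decomposeFin_symm_apply_zero 0 σ
    have hπ3 : ∀ (m : ℕ) (hm : m < n + 1) (hm1 : m - 1 < n), (k : ℕ) < m →
        π ⟨m, hm⟩ = (σ ⟨m - 1, hm1⟩).succ := by
      intro m hm hm1 hmk
      have hc1 : k.cycleRange ⟨m, hm⟩ = ⟨m, hm⟩ :=
        Fin.cycleRange_of_gt (by exact hmk)
      have hsucc : (⟨m, hm⟩ : Fin (n + 1)) = (⟨m - 1, hm1⟩ : Fin n).succ := by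
        ext; simp; omega
      rw [hπ, Equiv.Perm.mul_apply, hc1, hsucc,
        Equiv.Perm.decomposeFin_symm_apply_succ, Equiv.swap_self]
      simp
    have hL : (List.ofFn fun m => (Fin.cons x g : Fin (n + 1) → A) (π m)) =
        (wrd n g σ).take (k : ℕ) ++ x :: (wrd n g σ).drop (k : ℕ) := by
      apply List.ext_getElem
      · simp; omega
      · intro m hm1 hm2
        have hmn1 : m < n + 1 := by simpa using hm1
        rw [List.getElem_ofFn]
        rcases Nat.lt_trichotomy m (k : ℕ) with h | h | h
        · -- m < k
          have hmn : m < n := lt_of_lt_of_le h hkn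
          rw [List.getElem_append_left (by simp; omega), List.getElem_take,
            getElem_wrd _ _ _ _ hmn, hπ1 m hmn h, Fin.cons_succ]
        · -- m = k
          have hπ2' : π ⟨m, hmn1⟩ = 0 := by
            rw [show (⟨m, hmn1⟩ : Fin (n + 1)) = ⟨(k : ℕ), by omega⟩ from by
              ext; simp [h]]
            exact hπ2
          rw [hπ2', Fin.cons_zero]
          rw [List.getElem_append_right (by simp; omega)]
          have h0 : m - ((wrd n g σ).take (k : ℕ)).length = 0 := by
            simp [Nat.min_eq_left hkn]; omega
          simp only [h0, List.getElem_cons_zero]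
        · -- m > k
          have hm1n : m - 1 < n := by omega
          rw [hπ3 m hmn1 hm1n h, Fin.cons_succ]
          rw [List.getElem_append_right (by simp; omega)]
          have hidx : m - ((wrd n g σ).take (k : ℕ)).length = (m - (k : ℕ) - 1) + 1 := by
            simp [Nat.min_eq_left hkn]; omega
          simp only [hidx, List.getElem_cons_succ, List.getElem_drop]
          rw [getElem_wrd _ _ _ _ (by omega : (k : ℕ) + (m - (k : ℕ) - 1) < n)]
          congr 2
          ext
          simp
          omega
    rw [hL, List.prod_append, List.prod_cons, hsign]
    rw [smul_smul, ← mul_assoc]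


lemma stdPoly_vanish {K : Type*} [Field K] [CharZero K] [Module K A]
    (N : ℕ) (y : Fin N → A) (a b : Fin N) (hab : a ≠ b) (hy : y a = y b) :
    stdPoly N y = 0 := by
  have h : stdPoly N y = -stdPoly N y := by
    unfold stdPoly
    rw [← Finset.sum_neg_distrib]
    refine Fintype.sum_equiv (Equiv.mulLeft (Equiv.swap a b)) _ _ fun σ => ?_
    have hml : (Equiv.mulLeft (Equiv.swap a b)) σ = Equiv.swap a b * σ := rfl
    rw [hml]
    have hP : (List.ofFn fun i0 => y ((Equiv.swap a b * σ) i0)) =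
        (List.ofFn fun i0 => y (σ i0)) := by
      congr 1
      funext i0
      rcases eq_or_ne (σ i0) a with h1 | h1
      · rw [Equiv.Perm.mul_apply, h1, Equiv.swap_apply_left, ← hy]
      · rcases eq_or_ne (σ i0) b with h2 | h2
        · rw [Equiv.Perm.mul_apply, h2, Equiv.swap_apply_right, hy]
        · rw [Equiv.Perm.mul_apply, Equiv.swap_apply_of_ne_of_ne h1 h2]
    have hs : (Perm.sign (Equiv.swap a b * σ) : ℤ) = -(Perm.sign σ : ℤ) := by
      simp [Equiv.Perm.sign_mul, Equiv.Perm.sign_swap hab]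
    rw [hs, hP, neg_smul, neg_neg]
  have h2 : (2 : K) • stdPoly N y = 0 := by
    rw [two_smul]
    rw [eq_neg_iff_add_eq_zero] at h
    exact h
  calc stdPoly N y = (2 : K)⁻¹ • ((2 : K) • stdPoly N y) :=
        (inv_smul_smul₀ two_ne_zero _).symm
    _ = 0 := by rw [h2, smul_zero]

end Stmt11Aux

theorem stmt11 (K A : Type*) [Field K] [CharZero K] [Ring A] [Algebra K A]
    (G : Submodule K A) (hG : ∀ g ∈ G, ∀ x : A, g ^ 2 * x = x * g ^ 2)
    (n : ℕ) (g : Fin n → A) (hg : ∀ i, g i ∈ G) (i : Fin n) :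
    g i * stdPoly n g = ((-1 : ℤ) ^ (n - 1)) • (stdPoly n g * g i) := by
  classical
  have hn : 0 < n := i.pos
  set x := g i with hx
  have hc : ∀ (j : Fin n) (z : A), (x * g j + g j * x) * z = z * (x * g j + g j * x) := by
    intro j z
    have h1 := hG (g i) (hg i) z
    have h2 := hG (g j) (hg j) z
    have h3 := hG (g i + g j) (G.add_mem (hg i) (hg j)) z
    have hc0 : x * g j + g j * x = (g i + g j) ^ 2 - (g i) ^ 2 - (g j) ^ 2 := by
      rw [hx]; noncomm_ring
    rw [hc0, sub_mul, sub_mul, h3, h1, h2, mul_sub, mul_sub]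
  set a := Stmt11Aux.MM n g x 0 with ha
  set b := Stmt11Aux.EE n g x ⟨0, hn⟩ with hb
  have hvan : stdPoly (n + 1) (Fin.cons x g) = 0 := by
    refine Stmt11Aux.stdPoly_vanish (K := K) (n + 1) _ 0 i.succ
      (Fin.succ_ne_zero i).symm ?_
    rw [Fin.cons_zero, Fin.cons_succ]
  have hexp := Stmt11Aux.expansion n g x
  have hclosed := Stmt11Aux.MM_closed n g x hn hc
  set c : ℤ := ∑ k : Fin (n + 1), ((k : ℕ) : ℤ) with hcdef
  have key : ((n + 1 : ℕ) : ℤ) • a - c • b = 0 := by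
    rw [← hvan, ← hexp]
    have hterm : ∀ k : Fin (n + 1), ((-1 : ℤ) ^ (k : ℕ)) • Stmt11Aux.MM n g x (k : ℕ)
        = a - ((k : ℕ) : ℤ) • b := by
      intro k
      rw [hclosed (k : ℕ) (Nat.lt_succ_iff.mp k.isLt), smul_smul, ← pow_add,
        Even.neg_one_pow ⟨(k : ℕ), rfl⟩, one_smul]
    rw [Finset.sum_congr rfl fun k _ => hterm k, Finset.sum_sub_distrib,
      Finset.sum_const, ← Finset.sum_smul, ← hcdef, Finset.card_univ,
      Fintype.card_fin, Nat.cast_smul_eq_nsmul (R := ℤ)]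
  have hgauss : c * 2 = ((n + 1 : ℕ) : ℤ) * (n : ℕ) := by
    rw [hcdef, Fin.sum_univ_eq_sum_range (fun k => ((k : ℕ) : ℤ)) (n + 1)]
    have hg2 := Finset.sum_range_id_mul_two (n + 1)
    have h4 : (∑ i ∈ Finset.range (n + 1), (i : ℤ))
        = ((∑ i ∈ Finset.range (n + 1), i : ℕ) : ℤ) := by push_cast; rfl
    rw [h4]
    have h7 : (∑ i ∈ Finset.range (n + 1), i) * 2 = (n + 1) * n := by
      simpa using hg2
    exact_mod_cast congrArg (Nat.cast : ℕ → ℤ) h7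
  have key2 : ((n + 1 : ℕ) : ℤ) • ((2 : ℤ) • a - ((n : ℕ) : ℤ) • b) = 0 := by
    have e1 : ((n + 1 : ℕ) : ℤ) • ((2 : ℤ) • a - ((n : ℕ) : ℤ) • b)
        = (2 : ℤ) • (((n + 1 : ℕ) : ℤ) • a - c • b) := by
      rw [smul_sub, smul_sub, smul_smul, smul_smul, smul_smul, smul_smul,
        show (2 : ℤ) * c = c * 2 from mul_comm _ _, hgauss]
      rw [show ((n + 1 : ℕ) : ℤ) * 2 = 2 * ((n + 1 : ℕ) : ℤ) from mul_comm _ _]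
    rw [e1, key, smul_zero]
  have key3 : (2 : ℤ) • a = ((n : ℕ) : ℤ) • b := by
    have hK : (((n + 1 : ℕ) : ℤ) : K) • ((2 : ℤ) • a - ((n : ℕ) : ℤ) • b) = 0 := by
      rw [Int.cast_smul_eq_zsmul]; exact key2
    have hne : (((n + 1 : ℕ) : ℤ) : K) ≠ 0 := by
      rw [Int.cast_ne_zero]; exact_mod_cast Nat.succ_ne_zero n
    have h6 := congrArg (fun z => (((n + 1 : ℕ) : ℤ) : K)⁻¹ • z) hK
    simp only [inv_smul_smul₀ hne, smul_zero] at h6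
    rw [sub_eq_zero] at h6
    exact h6
  have hSx : stdPoly n g * x = ((-1 : ℤ) ^ (n + 1)) • a := by
    rw [← Stmt11Aux.MM_top n g x, hclosed n (le_refl n)]
    have h5 : a - ((n : ℕ) : ℤ) • b = -a := by rw [← key3]; module
    rw [h5, smul_neg, ← neg_smul]
    congr 1
    rw [pow_succ]
    ring
  have hpow : ((-1 : ℤ) ^ (n - 1)) * ((-1 : ℤ) ^ (n + 1)) = 1 := by
    rw [← pow_add, show n - 1 + (n + 1) = 2 * n from by omega, pow_mul]
    norm_num
  rw [hSx, smul_smul, hpow, one_smul]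
  exact (Stmt11Aux.MM_zero n g x).symm
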